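/- Every matrix of finite order in GL(2,ℤ) with determinant -1 has order exactly 2, and is conjugate in GL(2,ℤ) to exactly one of the matrices [[1,0],[0,-1]] and [[0,1],[1,0]]. -/
import Mathlib

section Stmt4Aux
set_option linter.unreachableTactic false
set_option linter.unusedTactic false
set_option linter.unnecessarySeqFocus false
open Matrix

open Matrix
abbrev M2 := Matrix (Fin 2) (Fin 2) ℤ
def zsm (k : ℤ) (M : M2) : M2 := !![k,0;0,k] * M

lemma ch2 (M : M2) : M * M = zsm M.trace M - zsm M.det 1 := by
  rw [Matrix.eta_fin_two M, Matrix.trace_fin_two_of, Matrix.det_fin_two_of]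
  ext i j
  fin_cases i <;> fin_cases j <;>
    simp [zsm, Matrix.mul_apply, Matrix.vecMul, dotProduct, Fin.sum_univ_two, Matrix.one_apply] <;> ring

lemma trace_zsm (k : ℤ) (M : M2) : (zsm k M).trace = k * M.trace := by
  simp [zsm, Matrix.trace_fin_two, Matrix.mul_apply, Matrix.vecMul, dotProduct, Fin.sum_univ_two]; ring

lemma mul_zsm (k : ℤ) (M N : M2) : M * zsm k N = zsm k (M * N) := by
  unfold zsm
  ext i j
  fin_cases i <;> fin_cases j <;>
    simp [Matrix.mul_apply, Matrix.vecMul, dotProduct, Fin.sum_univ_two] <;> ring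

lemma trace_one2 : (1 : M2).trace = 2 := by
  simp [Matrix.trace_one]

open Matrix


lemma trace_eq_zero (A : M2) (hdet : A.det = -1) (m : ℕ) (hm : 0 < m)
    (hAm : A ^ m = 1) : A.trace = 0 := by
  by_contra ht
  set B := A * A with hB
  have hdetB : B.det = 1 := by rw [hB, Matrix.det_mul, hdet]; norm_num
  have htB : B.trace = A.trace * A.trace + 2 := by
    rw [hB, ch2 A, hdet]
    have : zsm A.trace A - zsm (-1) 1 = zsm A.trace A + zsm 1 1 := by
      unfold zsm; ext i j;
      fin_cases i <;> fin_cases j <;>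
        simp [Matrix.mul_apply, Matrix.vecMul, dotProduct, Fin.sum_univ_two,
          Matrix.one_apply] <;> ring
    rw [this, Matrix.trace_add, trace_zsm, trace_zsm, trace_one2]; ring
  have hτ : 3 ≤ B.trace := by
    linarith [mul_self_pos.mpr ht]
  have hBB : B * B = zsm B.trace B - zsm 1 1 := by
    have := ch2 B; rwa [hdetB] at this
  -- recurrence for traces
  have hrec : ∀ n : ℕ, (B ^ (n + 2)).trace = B.trace * (B ^ (n + 1)).trace - (B ^ n).trace := by
    intro n
    have h1 : B ^ (n + 2) = B ^ n * (B * B) := by rw [pow_add, pow_two]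
    have hone : (B ^ n) * zsm 1 1 = B ^ n := by
      rw [mul_zsm, mul_one]
      unfold zsm; rw [show !![(1:ℤ),0;0,1] = (1 : M2) by
        ext i j; fin_cases i <;> fin_cases j <;> simp [Matrix.one_apply], one_mul]
    rw [h1, hBB, mul_sub, hone, mul_zsm, Matrix.trace_sub, trace_zsm,
      show B ^ n * B = B ^ (n+1) from (pow_succ B n).symm]
  have key : ∀ n : ℕ, (B ^ n).trace + 1 ≤ (B ^ (n+1)).trace ∧ 3 ≤ (B ^ (n+1)).trace := by
    intro n
    induction n with
    | zero => simp [trace_one2]; omega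
    | succ n ih =>
      obtain ⟨ih1, ih2⟩ := ih
      have h := hrec n
      constructor <;> nlinarith
  have hBm : B ^ m = 1 := by
    rw [hB, (Commute.refl A).mul_pow, hAm, one_mul]
  obtain ⟨n, rfl⟩ : ∃ n, m = n + 1 := ⟨m - 1, by omega⟩
  have := (key n).2
  rw [hBm, trace_one2] at this
  omega
open Matrix
def Conj2 (A B : M2) : Prop := ∃ P : M2, IsUnit P.det ∧ A = P * B * P⁻¹

lemma conj_of_eq {A B : M2} (P : M2) (hP : IsUnit P.det) (h : A * P = P * B) : Conj2 A B := by
  refine ⟨P, hP, ?_⟩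
  calc A = A * (P * P⁻¹) := by rw [Matrix.mul_nonsing_inv _ hP, mul_one]
    _ = (A * P) * P⁻¹ := by rw [mul_assoc]
    _ = P * B * P⁻¹ := by rw [h]

lemma conj_trans {A B C : M2} (h1 : Conj2 A B) (h2 : Conj2 B C) : Conj2 A C := by
  obtain ⟨P, hP, rfl⟩ := h1
  obtain ⟨Q, hQ, rfl⟩ := h2
  refine conj_of_eq (P * Q) (by simp [hP.mul hQ]) ?_
  simp only [mul_assoc]
  rw [← mul_assoc P⁻¹ P Q, Matrix.nonsing_inv_mul _ hP, one_mul,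
      Matrix.nonsing_inv_mul _ hQ, mul_one]

lemma unit_det_of_eq_one {P : M2} (h : P.det = 1) : IsUnit P.det := h ▸ isUnit_one
lemma unit_det_of_eq_negone {P : M2} (h : P.det = -1) : IsUnit P.det :=
  h ▸ (isUnit_one.neg)

-- shear conjugation
lemma shear (a b c u : ℤ) :
    Conj2 !![a, b; c, -a] !![a - u*c, b + u*(2*a - u*c); c, -(a - u*c)] := by
  refine conj_of_eq !![1, u; 0, 1] (unit_det_of_eq_one (by simp [Matrix.det_fin_two_of])) ?_
  ext i j
  fin_cases i <;> fin_cases j <;>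
    simp [Matrix.mul_apply, Matrix.vecMul, dotProduct, Fin.sum_univ_two] <;> try ring

-- swap conjugation
lemma swapc (a b c : ℤ) : Conj2 !![a, b; c, -a] !![-a, c; b, a] := by
  refine conj_of_eq !![0, 1; 1, 0] (unit_det_of_eq_negone (by simp [Matrix.det_fin_two_of])) ?_
  ext i j
  fin_cases i <;> fin_cases j <;>
    simp [Matrix.mul_apply, Matrix.vecMul, dotProduct, Fin.sum_univ_two]

-- near division
lemma near_pos (a c : ℤ) (hpos : 0 < c) : ∃ u : ℤ, 2 * |a - u * c| ≤ c := by
  have hr0 : 0 ≤ a % c := Int.emod_nonneg a (by omega)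
  have hr1 : a % c < c := Int.emod_lt_of_pos a hpos
  have hdef : a % c = a - c * (a / c) := Int.emod_def a c
  by_cases h2 : 2 * (a % c) ≤ c
  · refine ⟨a / c, ?_⟩
    have h3 : a - (a / c) * c = a % c := by linear_combination -hdef
    rw [h3, abs_of_nonneg hr0]; omega
  · refine ⟨a / c + 1, ?_⟩
    have h3 : a - (a / c + 1) * c = a % c - c := by linear_combination -hdef
    rw [h3, abs_of_nonpos (by omega)]; omega

lemma near (a c : ℤ) (hc : c ≠ 0) : ∃ u : ℤ, 2 * |a - u * c| ≤ |c| := by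
  rcases hc.lt_or_gt with hneg | hpos
  · obtain ⟨u, hu⟩ := near_pos a (-c) (by omega)
    refine ⟨-u, ?_⟩
    rw [abs_of_neg hneg, show a - -u * c = a - u * (-c) by ring]
    exact hu
  · obtain ⟨u, hu⟩ := near_pos a c hpos
    exact ⟨u, by rwa [abs_of_pos hpos]⟩

def Dm : M2 := !![1, 0; 0, -1]
def Sm : M2 := !![0, 1; 1, 0]

-- helper tactic-proof of concrete products
lemma case_c0 (a b : ℤ) (h : a * a = 1) :
    Conj2 !![a, b; 0, -a] Dm ∨ Conj2 !![a, b; 0, -a] Sm := by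
  rcases mul_self_eq_one_iff.mp h with rfl | rfl
  · rcases Int.even_or_odd b with ⟨k, hk⟩ | ⟨k, hk⟩
    · left
      refine conj_of_eq !![1, -k; 0, 1] (unit_det_of_eq_one (by simp [Matrix.det_fin_two_of])) ?_
      subst hk
      ext i j
      fin_cases i <;> fin_cases j <;>
        simp [Dm, Matrix.mul_apply, Matrix.vecMul, dotProduct, Fin.sum_univ_two] <;> try ring
    · right
      refine conj_of_eq !![-(k+1), k; 1, -1]
        (unit_det_of_eq_one (by simp [Matrix.det_fin_two_of])) ?_
      subst hk
      ext i j
      fin_cases i <;> fin_cases j <;>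
        simp [Sm, Matrix.mul_apply, Matrix.vecMul, dotProduct, Fin.sum_univ_two] <;> try ring
  · have step1 : Conj2 !![(-1 : ℤ), b; 0, 1] !![1, 0; b, -1] := by
      refine conj_of_eq !![0, 1; 1, 0] (unit_det_of_eq_negone (by simp [Matrix.det_fin_two_of])) ?_
      ext i j
      fin_cases i <;> fin_cases j <;>
        simp [Matrix.mul_apply, Matrix.vecMul, dotProduct, Fin.sum_univ_two]
    have h11 : (!![(-1 : ℤ), b; 0, 1] : M2) = !![(-1 : ℤ), b; 0, -(-1)] := by norm_num
    rw [← h11]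
    rcases Int.even_or_odd b with ⟨k, hk⟩ | ⟨k, hk⟩
    · left
      refine conj_trans step1 ?_
      refine conj_of_eq !![1, 0; k, 1] (unit_det_of_eq_one (by simp [Matrix.det_fin_two_of])) ?_
      subst hk
      ext i j
      fin_cases i <;> fin_cases j <;>
        simp [Dm, Matrix.mul_apply, Matrix.vecMul, dotProduct, Fin.sum_univ_two] <;> try ring
    · right
      refine conj_trans step1 ?_
      refine conj_of_eq !![1, 1; k, k+1]
        (unit_det_of_eq_one (by simp [Matrix.det_fin_two_of])) ?_
      subst hk
      ext i j
      fin_cases i <;> fin_cases j <;>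
        simp [Sm, Matrix.mul_apply, Matrix.vecMul, dotProduct, Fin.sum_univ_two] <;> try ring

lemma case_c1 (a b c : ℤ) (hc : c = 1 ∨ c = -1) (h : a * a + b * c = 1) :
    Conj2 !![a, b; c, -a] Dm ∨ Conj2 !![a, b; c, -a] Sm := by
  right
  have h2 := shear a b c (a * c)
  rcases hc with rfl | rfl
  · have e : !![a - a*1*1, b + a*1*(2*a - a*1*1); 1, -(a - a*1*1)] = Sm := by
      ext i j
      fin_cases i <;> fin_cases j <;> simp [Sm] <;> linear_combination h
    rwa [e] at h2
  · have e : !![a - a*(-1)*(-1), b + a*(-1)*(2*a - a*(-1)*(-1)); -1, -(a - a*(-1)*(-1))]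
        = !![0, -1; -1, 0] := by
      ext i j
      fin_cases i <;> fin_cases j <;> simp <;> linear_combination -h
    rw [e] at h2
    refine conj_trans h2 ?_
    refine conj_of_eq Dm (unit_det_of_eq_negone (by simp [Dm, Matrix.det_fin_two_of])) ?_
    ext i j
    fin_cases i <;> fin_cases j <;>
      simp [Dm, Sm, Matrix.mul_apply, Matrix.vecMul, dotProduct, Fin.sum_univ_two]

lemma reduce : ∀ n : ℕ, ∀ a b c : ℤ, c.natAbs ≤ n → a * a + b * c = 1 →
    Conj2 !![a, b; c, -a] Dm ∨ Conj2 !![a, b; c, -a] Sm := by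
  intro n
  induction n with
  | zero =>
    intro a b c hc h
    have hc0 : c = 0 := by omega
    subst hc0
    exact case_c0 a b (by linarith)
  | succ n ih =>
    intro a b c hc h
    by_cases hcn : c.natAbs ≤ n
    · exact ih a b c hcn h
    · by_cases hc1 : c = 1 ∨ c = -1
      · exact case_c1 a b c hc1 h
      · push_neg at hc1
        have hc0 : c ≠ 0 := by intro h0; subst h0; simp at hcn
        have hcabs : 2 ≤ c.natAbs := by omega
        obtain ⟨u, hu⟩ := near a c hc0
        set a' := a - u * c with ha'
        set b' := b + u * (2*a - u*c) with hb'
        have h' : a' * a' + b' * c = 1 := by rw [ha', hb']; linear_combination h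
        have habs2 : 2 ≤ |c| := by rw [Int.abs_eq_natAbs]; exact_mod_cast hcabs
        have hbc : b' * c = 1 - a' * a' := by linarith
        have h4 : |1 - a' * a'| < |c| * |c| := by
          have haa : |a'| * |a'| = a' * a' := abs_mul_abs_self a'
          have ha0 : 0 ≤ |a'| := abs_nonneg a'
          rcases abs_cases (1 - a' * a') with ⟨he, _⟩ | ⟨he, _⟩ <;> rw [he] <;> nlinarith
        have hblt : |b'| < |c| := by
          have e : |b'| * |c| = |1 - a' * a'| := by rw [← abs_mul, hbc]
          by_contra hcon
          push_neg at hcon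
          have : |c| * |c| ≤ |b'| * |c| := by nlinarith
          omega
        have hbn : b'.natAbs ≤ n := by
          rw [Int.abs_eq_natAbs, Int.abs_eq_natAbs] at hblt
          have := Int.ofNat_lt.mp hblt
          omega
        have h'' : (-a') * (-a') + c * b' = 1 := by linear_combination h'
        have hrec := ih (-a') c b' hbn h''
        simp only [neg_neg] at hrec
        have step1 : Conj2 !![a, b; c, -a] !![a', b'; c, -a'] := by
          rw [ha', hb']; exact shear a b c u
        have step2 : Conj2 !![a', b'; c, -a'] !![-a', c; b', a'] := swapc a' b' c
        rcases hrec with hD | hS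
        · exact Or.inl (conj_trans step1 (conj_trans step2 hD))
        · exact Or.inr (conj_trans step1 (conj_trans step2 hS))

open Matrix

noncomputable def phi2 : M2 →+* Matrix (Fin 2) (Fin 2) (ZMod 2) :=
  (Int.castRingHom (ZMod 2)).mapMatrix

lemma not_both (A : M2)
    (h1 : ∃ P : M2, IsUnit P.det ∧ A = P * Dm * P⁻¹)
    (h2 : ∃ P : M2, IsUnit P.det ∧ A = P * Sm * P⁻¹) : False := by
  obtain ⟨P, hP, hPA⟩ := h1
  obtain ⟨Q, hQ, hQA⟩ := h2
  have hDm : phi2 Dm = 1 := by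
    ext i j
    fin_cases i <;> fin_cases j <;>
      simp [phi2, Dm, Matrix.one_apply] <;> decide
  have hA1 : phi2 A = 1 := by
    rw [hPA, _root_.map_mul, _root_.map_mul, hDm, mul_one, ← _root_.map_mul, Matrix.mul_nonsing_inv _ hP, _root_.map_one]
  have e2 : phi2 (Q⁻¹) * phi2 Q = 1 := by
    rw [← _root_.map_mul, Matrix.nonsing_inv_mul _ hQ, _root_.map_one]
  have hA2 : phi2 Q * phi2 Sm * phi2 (Q⁻¹) = 1 := by
    rw [← _root_.map_mul, ← _root_.map_mul, ← hQA, hA1]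
  have hSm1 : phi2 Sm = 1 := by
    calc phi2 Sm = 1 * phi2 Sm * 1 := by rw [one_mul, mul_one]
      _ = (phi2 (Q⁻¹) * phi2 Q) * phi2 Sm * (phi2 (Q⁻¹) * phi2 Q) := by rw [e2]
      _ = phi2 (Q⁻¹) * (phi2 Q * phi2 Sm * phi2 (Q⁻¹)) * phi2 Q := by
            simp only [mul_assoc]
      _ = phi2 (Q⁻¹) * phi2 Q := by rw [hA2, mul_one]
      _ = 1 := e2
  have : (phi2 Sm) 0 0 = (1 : Matrix (Fin 2) (Fin 2) (ZMod 2)) 0 0 := by rw [hSm1]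
  simp [phi2, Sm, Matrix.one_apply] at this

end Stmt4Aux


theorem stmt_4 (g : GL (Fin 2) ℤ) (hfin : ∃ m : ℕ, 0 < m ∧ g ^ m = 1)
    (hdet : (g : Matrix (Fin 2) (Fin 2) ℤ).det = -1) :
    orderOf g = 2 ∧
    Xor'
      (∃ P : Matrix (Fin 2) (Fin 2) ℤ, IsUnit P.det ∧
        (g : Matrix (Fin 2) (Fin 2) ℤ) = P * !![1, 0; 0, -1] * P⁻¹)
      (∃ P : Matrix (Fin 2) (Fin 2) ℤ, IsUnit P.det ∧
        (g : Matrix (Fin 2) (Fin 2) ℤ) = P * !![0, 1; 1, 0] * P⁻¹) := by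
  obtain ⟨m, hm, hgm⟩ := hfin
  set A := ((g : Matrix (Fin 2) (Fin 2) ℤ)) with hA
  have hAm : A ^ m = 1 := by
    have h1 : ((g ^ m : GL (Fin 2) ℤ) : Matrix (Fin 2) (Fin 2) ℤ) = 1 := by rw [hgm]; rfl
    rwa [Units.val_pow_eq_pow_val] at h1
  have ht : A.trace = 0 := trace_eq_zero A hdet m hm hAm
  have hA2 : A * A = 1 := by
    rw [ch2 A, ht, hdet]
    unfold zsm
    ext i j
    fin_cases i <;> fin_cases j <;>
      simp [Matrix.mul_apply, Matrix.vecMul, dotProduct, Fin.sum_univ_two,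
        Matrix.one_apply]
  have hg2 : g ^ 2 = 1 := by
    apply Units.ext
    rw [Units.val_pow_eq_pow_val, pow_two, Units.val_one]
    exact hA2
  have hg1 : g ≠ 1 := by
    intro h
    have hA1' : A = 1 := by rw [hA, h, Units.val_one]
    rw [hA1'] at hdet
    simp at hdet
  refine ⟨orderOf_eq_prime hg2 hg1, ?_⟩
  have hd : A 1 1 = -A 0 0 := by
    have h2 := Matrix.trace_fin_two A
    rw [ht] at h2
    linarith
  have hAeta : A = !![A 0 0, A 0 1; A 1 0, -(A 0 0)] := by
    have e := Matrix.eta_fin_two A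
    rw [hd] at e
    exact e
  have hdet2 : A 0 0 * A 0 0 + A 0 1 * A 1 0 = 1 := by
    have h3 := Matrix.det_fin_two A
    rw [hdet, hd] at h3
    linarith
  have hred := reduce (A 1 0).natAbs (A 0 0) (A 0 1) (A 1 0) le_rfl hdet2
  rw [← hAeta] at hred
  unfold Conj2 Dm Sm at hred
  rcases hred with hD | hS
  · exact Or.inl ⟨hD, fun hS' => not_both A hD hS'⟩
  · exact Or.inr ⟨hS, fun hD' => not_both A hD' hS⟩
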